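/- Let A = D(α,β) with β ≠ 0, graded by a group G compatibly with the ℕ-grading, and let x₁, x₂ be two linearly independent G-homogeneous elements of the degree-1 component A₁. Suppose two nontrivial relations hold in A: f₁ := Σ_{i,j,l=1}^{2} c_{i,j,l} x_i x_j x_l = 0 and f₂ := Σ_{i,j,l=1}^{2} e_{i,j,l} x_i x_j x_l = 0 (with not all c_{i,j,l} zero and not all e_{i,j,l} zero), and suppose there exists a triple (i,j,l) with c_{i,j,l} ≠ 0 and e_{i,j,l} = 0. Then all monomials x_i x_j x_l for which e_{i,j,l} ≠ 0 have the same G-degree, i.e. deg_G(x_i)·deg_G(x_j)·deg_G(x_l) is the same element of G for all such triples. -/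

import Mathlib

open FreeAlgebra

noncomputable section

/-- The defining relations of the down-up algebra `D(a,b)` (with `u = ι k 0`, `d = ι k 1`). -/
inductive DownUpRel (k : Type*) [CommRing k] (a b : k) :
    FreeAlgebra k (Fin 2) → FreeAlgebra k (Fin 2) → Prop
  | rel1 : DownUpRel k a b (ι k 0 * ι k 0 * ι k 1)
      (a • (ι k 0 * ι k 1 * ι k 0) + b • (ι k 1 * ι k 0 * ι k 0))
  | rel2 : DownUpRel k a b (ι k 0 * ι k 1 * ι k 1)
      (a • (ι k 1 * ι k 0 * ι k 1) + b • (ι k 1 * ι k 1 * ι k 0))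

/-- The down-up algebra `D(a,b)`. -/
abbrev DownUp (k : Type*) [CommRing k] (a b : k) : Type _ :=
  RingQuot (DownUpRel k a b)

/-- The generator `u` of the down-up algebra. -/
def DownUp.u (k : Type*) [CommRing k] (a b : k) : DownUp k a b :=
  RingQuot.mkAlgHom k (DownUpRel k a b) (ι k 0)

/-- The generator `d` of the down-up algebra. -/
def DownUp.d (k : Type*) [CommRing k] (a b : k) : DownUp k a b :=
  RingQuot.mkAlgHom k (DownUpRel k a b) (ι k 1)

/-- The image in `D(a,b)` of a word in the free monoid on the generators `u, d`. -/
def DownUp.wordVal (k : Type*) [CommRing k] (a b : k) :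
    FreeMonoid (Fin 2) →* DownUp k a b :=
  FreeMonoid.lift fun i => RingQuot.mkAlgHom k (DownUpRel k a b) (ι k i)

/-- The degree-`n` component of the down-up algebra: the `k`-span of the images of
all words of length `n` in `u` and `d`. -/
def DownUp.degComp (k : Type*) [CommRing k] (a b : k) (n : ℕ) :
    Submodule k (DownUp k a b) :=
  Submodule.span k {z | ∃ w : FreeMonoid (Fin 2), w.length = n ∧ DownUp.wordVal k a b w = z}

namespace DUAux

open FreeMonoid Finsupp

variable (k : Type*) [Field k] (α β : k)

abbrev W := FreeMonoid (Fin 2) →₀ k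

def red (w : List (Fin 2)) : W k :=
  if w = [0,0,1] then
    α • Finsupp.single (ofList [0,1,0]) 1 + β • Finsupp.single (ofList [1,0,0]) 1
  else if w = [0,1,1] then
    α • Finsupp.single (ofList [1,0,1]) 1 + β • Finsupp.single (ofList [1,1,0]) 1
  else Finsupp.single (ofList w) 1

def Uf (w : FreeMonoid (Fin 2)) : W k :=
  if (toList w).length ≤ 2 then red k α β (0 :: toList w) else 0

def Df (w : FreeMonoid (Fin 2)) : W k :=
  if (toList w).length ≤ 2 then Finsupp.single (ofList (1 :: toList w)) 1 else 0

def Uop : W k →ₗ[k] W k := Finsupp.lift (W k) k (FreeMonoid (Fin 2)) (Uf k α β)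

def Dop : W k →ₗ[k] W k := Finsupp.lift (W k) k (FreeMonoid (Fin 2)) (Df k)

lemma Uop_single (w : FreeMonoid (Fin 2)) (b : k) :
    Uop k α β (Finsupp.single w b) = b • Uf k α β w := by
  simp [Uop, Finsupp.lift_apply, Finsupp.sum_single_index]

lemma Dop_single (w : FreeMonoid (Fin 2)) (b : k) :
    Dop k (Finsupp.single w b) = b • Df k w := by
  simp [Dop, Finsupp.lift_apply, Finsupp.sum_single_index]

/-- submodule of length-`n` supported vectors -/
def L (n : ℕ) : Submodule k (W k) :=
  Finsupp.supported k k {w : FreeMonoid (Fin 2) | (toList w).length = n}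

lemma single_mem_L (l : List (Fin 2)) (b : k) : Finsupp.single (ofList l) b ∈ L k l.length :=
  Finsupp.single_mem_supported k b rfl

lemma red_mem (w : List (Fin 2)) : red k α β w ∈ L k w.length := by
  unfold red
  split_ifs with h1 h2
  · subst h1
    exact add_mem (Submodule.smul_mem _ _ (single_mem_L k [0,1,0] 1))
      (Submodule.smul_mem _ _ (single_mem_L k [1,0,0] 1))
  · subst h2
    exact add_mem (Submodule.smul_mem _ _ (single_mem_L k [1,0,1] 1))
      (Submodule.smul_mem _ _ (single_mem_L k [1,1,0] 1))
  · exact single_mem_L k w 1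

lemma Uf_mem (w : FreeMonoid (Fin 2)) : Uf k α β w ∈ L k ((toList w).length + 1) := by
  unfold Uf
  split_ifs with h
  · simpa using red_mem k α β (0 :: toList w)
  · exact zero_mem _

lemma Df_mem (w : FreeMonoid (Fin 2)) : Df k w ∈ L k ((toList w).length + 1) := by
  unfold Df
  split_ifs with h
  · simpa using single_mem_L k (1 :: toList w) 1
  · exact zero_mem _

lemma Uop_mem {n : ℕ} {v : W k} (hv : v ∈ L k n) : Uop k α β v ∈ L k (n + 1) := by
  rw [L, Finsupp.supported_eq_span_single] at hv
  induction hv using Submodule.span_induction with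
  | mem z hz =>
      obtain ⟨w, hw, rfl⟩ := hz
      rw [Uop_single, one_smul]
      exact hw ▸ Uf_mem k α β w
  | zero => simp
  | add y z _ _ hy hz => rw [map_add]; exact add_mem hy hz
  | smul a y _ hy => rw [map_smul]; exact Submodule.smul_mem _ _ hy

lemma Dop_mem {n : ℕ} {v : W k} (hv : v ∈ L k n) : Dop k v ∈ L k (n + 1) := by
  rw [L, Finsupp.supported_eq_span_single] at hv
  induction hv using Submodule.span_induction with
  | mem z hz =>
      obtain ⟨w, hw, rfl⟩ := hz
      rw [Dop_single, one_smul]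
      exact hw ▸ Df_mem k w
  | zero => simp
  | add y z _ _ hy hz => rw [map_add]; exact add_mem hy hz
  | smul a y _ hy => rw [map_smul]; exact Submodule.smul_mem _ _ hy

lemma Uop_zero {n : ℕ} (hn : 3 ≤ n) {v : W k} (hv : v ∈ L k n) : Uop k α β v = 0 := by
  rw [L, Finsupp.supported_eq_span_single] at hv
  induction hv using Submodule.span_induction with
  | mem z hz =>
      obtain ⟨w, hw, rfl⟩ := hz
      rw [Uop_single, one_smul, Uf, if_neg (by simp only [Set.mem_setOf_eq] at hw; omega)]
  | zero => simp
  | add y z _ _ hy hz => rw [map_add, hy, hz, add_zero]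
  | smul a y _ hy => rw [map_smul, hy, smul_zero]

lemma Dop_zero {n : ℕ} (hn : 3 ≤ n) {v : W k} (hv : v ∈ L k n) : Dop k v = 0 := by
  rw [L, Finsupp.supported_eq_span_single] at hv
  induction hv using Submodule.span_induction with
  | mem z hz =>
      obtain ⟨w, hw, rfl⟩ := hz
      rw [Dop_single, one_smul, Df, if_neg (by simp only [Set.mem_setOf_eq] at hw; omega)]
  | zero => simp
  | add y z _ _ hy hz => rw [map_add, hy, hz, add_zero]
  | smul a y _ hy => rw [map_smul, hy, smul_zero]


lemma Dof (l : List (Fin 2)) (h : l.length ≤ 2) :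
    Dop k (Finsupp.single (ofList l) 1) = Finsupp.single (ofList (1 :: l)) 1 := by
  rw [Dop_single, one_smul, Df, toList_ofList, if_pos h]

lemma Uof (l : List (Fin 2)) (h : l.length ≤ 2) (h1 : l ≠ [0,1]) (h2 : l ≠ [1,1]) :
    Uop k α β (Finsupp.single (ofList l) 1) = Finsupp.single (ofList (0 :: l)) 1 := by
  rw [Uop_single, one_smul, Uf, toList_ofList, if_pos h, red,
    if_neg (by intro hh; injection hh with ha hb; exact h1 hb),
    if_neg (by intro hh; injection hh with ha hb; exact h2 hb)]

lemma Uof1 : Uop k α β (Finsupp.single (ofList [0,1]) 1) =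
    α • Finsupp.single (ofList [0,1,0]) 1 + β • Finsupp.single (ofList [1,0,0]) 1 := by
  rw [Uop_single, one_smul, Uf, toList_ofList, if_pos (by norm_num), red, if_pos rfl]

lemma Uof2 : Uop k α β (Finsupp.single (ofList [1,1]) 1) =
    α • Finsupp.single (ofList [1,0,1]) 1 + β • Finsupp.single (ofList [1,1,0]) 1 := by
  rw [Uop_single, one_smul, Uf, toList_ofList, if_pos (by norm_num), red,
    if_neg (by decide), if_pos rfl]

def opOf : Fin 2 → Module.End k (W k) := ![Uop k α β, Dop k]

def freeLift : FreeAlgebra k (Fin 2) →ₐ[k] Module.End k (W k) :=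
  FreeAlgebra.lift k (opOf k α β)

lemma rel_preserved : ∀ ⦃x y⦄, DownUpRel k α β x y → freeLift k α β x = freeLift k α β y := by
  intro p q h
  have hU : freeLift k α β (ι k 0) = Uop k α β := by
    simp [freeLift, FreeAlgebra.lift_ι_apply, opOf]
  have hD : freeLift k α β (ι k 1) = Dop k := by
    simp [freeLift, FreeAlgebra.lift_ι_apply, opOf]
  cases h with
  | rel1 =>
      simp only [map_mul, map_add, map_smul, hU, hD]
      refine Finsupp.lhom_ext fun w b => ?_
      rw [← ofList_toList w]
      generalize toList w = l
      rcases l with _ | ⟨a, t⟩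
      · simp only [Module.End.mul_apply, LinearMap.add_apply, LinearMap.smul_apply,
          ← Finsupp.smul_single_one (ofList []) b, map_smul]
        rw [Dof k [] (by norm_num), Uof k α β [1] (by norm_num) (by decide) (by decide),
          Uof1, Uof k α β [] (by norm_num) (by decide) (by decide),
          Dof k [0] (by norm_num), Uof k α β [1,0] (by norm_num) (by decide) (by decide),
          Uof k α β [0] (by norm_num) (by decide) (by decide), Dof k [0,0] (by norm_num)]
        all_goals module
      · have hm : Finsupp.single (ofList (a :: t)) b ∈ L k (t.length + 1) :=
          single_mem_L k (a :: t) b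
        simp only [Module.End.mul_apply, LinearMap.add_apply, LinearMap.smul_apply]
        rw [Uop_zero k α β (by omega) (Uop_mem k α β (Dop_mem k hm)),
          Uop_zero k α β (by omega) (Dop_mem k (Uop_mem k α β hm)),
          Dop_zero k (by omega) (Uop_mem k α β (Uop_mem k α β hm))]
        try simp
  | rel2 =>
      simp only [map_mul, map_add, map_smul, hU, hD]
      refine Finsupp.lhom_ext fun w b => ?_
      rw [← ofList_toList w]
      generalize toList w = l
      rcases l with _ | ⟨a, t⟩
      · simp only [Module.End.mul_apply, LinearMap.add_apply, LinearMap.smul_apply,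
          ← Finsupp.smul_single_one (ofList []) b, map_smul]
        rw [Dof k [] (by norm_num), Dof k [1] (by norm_num), Uof2,
          Uof k α β [1] (by norm_num) (by decide) (by decide), Dof k [0,1] (by norm_num),
          Uof k α β [] (by norm_num) (by decide) (by decide), Dof k [0] (by norm_num),
          Dof k [1,0] (by norm_num)]
        all_goals module
      · have hm : Finsupp.single (ofList (a :: t)) b ∈ L k (t.length + 1) :=
          single_mem_L k (a :: t) b
        simp only [Module.End.mul_apply, LinearMap.add_apply, LinearMap.smul_apply]
        rw [Uop_zero k α β (by omega) (Dop_mem k (Dop_mem k hm)),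
          Dop_zero k (by omega) (Uop_mem k α β (Dop_mem k hm)),
          Dop_zero k (by omega) (Dop_mem k (Uop_mem k α β hm))]
        try simp


def psi : DownUp k α β →ₐ[k] Module.End k (W k) :=
  RingQuot.liftAlgHom k ⟨freeLift k α β, rel_preserved k α β⟩

/-- the generators of the down-up algebra -/
def gen (i : Fin 2) : DownUp k α β := RingQuot.mkAlgHom k (DownUpRel k α β) (ι k i)

lemma psi_gen (i : Fin 2) : psi k α β (gen k α β i) = opOf k α β i := by
  rw [psi, gen, RingQuot.liftAlgHom_mkAlgHom_apply, freeLift, FreeAlgebra.lift_ι_apply]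

lemma opOf_zero : opOf k α β 0 = Uop k α β := rfl
lemma opOf_one : opOf k α β 1 = Dop k := rfl

/-- the word value as product of generators -/
def wv : FreeMonoid (Fin 2) →* DownUp k α β := FreeMonoid.lift (gen k α β)

lemma wv3 (a b c : Fin 2) : wv k α β (ofList [a,b,c]) = gen k α β a * (gen k α β b * gen k α β c) := by
  simp [wv, FreeMonoid.lift_ofList]

def m6 : Fin 6 → List (Fin 2)
  | 0 => [0,0,0] | 1 => [0,1,0] | 2 => [1,0,0] | 3 => [1,0,1] | 4 => [1,1,0] | 5 => [1,1,1]

lemma psi_word_eval (i : Fin 6) :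
    psi k α β (wv k α β (ofList (m6 i))) (Finsupp.single (ofList []) 1) =
      Finsupp.single (ofList (m6 i)) 1 := by
  fin_cases i <;>
  · simp only [m6]
    simp only [wv3, map_mul, psi_gen, opOf_zero, opOf_one, Module.End.mul_apply]
    first
    | rw [Uof k α β [] (by norm_num) (by decide) (by decide),
        Uof k α β [0] (by norm_num) (by decide) (by decide),
        Uof k α β [0,0] (by norm_num) (by decide) (by decide)]
    | rw [Uof k α β [] (by norm_num) (by decide) (by decide),
        Dof k [0] (by norm_num),
        Uof k α β [1,0] (by norm_num) (by decide) (by decide)]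
    | rw [Uof k α β [] (by norm_num) (by decide) (by decide),
        Uof k α β [0] (by norm_num) (by decide) (by decide),
        Dof k [0,0] (by norm_num)]
    | rw [Dof k [] (by norm_num),
        Uof k α β [1] (by norm_num) (by decide) (by decide),
        Dof k [0,1] (by norm_num)]
    | rw [Uof k α β [] (by norm_num) (by decide) (by decide),
        Dof k [0] (by norm_num), Dof k [1,0] (by norm_num)]
    | rw [Dof k [] (by norm_num), Dof k [1] (by norm_num), Dof k [1,1] (by norm_num)]

lemma words_indep : LinearIndependent k (fun i : Fin 6 => wv k α β (ofList (m6 i))) := by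
  have hm : Function.Injective m6 := by decide
  have hinj : Function.Injective (fun i : Fin 6 => ofList (m6 i)) := by
    intro i j h
    exact hm (by simpa [toList_ofList] using congrArg toList h)
  have hsing : LinearIndependent k (fun i : Fin 6 => Finsupp.single (ofList (m6 i)) (1:k)) := by
    have hb := (Finsupp.basisSingleOne (ι := FreeMonoid (Fin 2)) (R := k)).linearIndependent
    have h2 := hb.comp _ hinj
    simpa [Finsupp.coe_basisSingleOne, Function.comp_def] using h2
  let ev : DownUp k α β →ₗ[k] W k :=
    (LinearMap.applyₗ (Finsupp.single (ofList []) 1)).comp (psi k α β).toLinearMap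
  have hcomp : ev ∘ (fun i : Fin 6 => wv k α β (ofList (m6 i)))
      = fun i : Fin 6 => Finsupp.single (ofList (m6 i)) (1:k) := by
    funext i
    exact psi_word_eval k α β i
  exact LinearIndependent.of_comp ev (hcomp ▸ hsing)

lemma sum_comp_eq_zero {R M ι : Type*} [Semiring R] [AddCommMonoid M] [Module R M]
    [DecidableEq ι] (𝒜 : ι → Submodule R M) (hd : DirectSum.IsInternal 𝒜)
    {s : Finset ι} {S : ι → M} (hmem : ∀ δ ∈ s, S δ ∈ 𝒜 δ) (hsum : ∑ δ ∈ s, S δ = 0) :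
    ∀ δ ∈ s, S δ = 0 := by
  intro δ hδ
  set a : DirectSum ι (fun i => ↥(𝒜 i)) :=
    ∑ p ∈ s.attach, DirectSum.of (fun i => ↥(𝒜 i)) p.1 ⟨S p.1, hmem p.1 p.2⟩ with ha
  have h1 : DirectSum.coeAddMonoidHom 𝒜 a = 0 := by
    rw [ha, map_sum]
    simp only [DirectSum.coeAddMonoidHom_of]
    rw [Finset.sum_attach]
    exact hsum
  have h2 : a = 0 := by
    apply hd.injective
    rw [h1, map_zero]
  have h4 : a δ = ⟨S δ, hmem δ hδ⟩ := by
    rw [ha, DFinsupp.finset_sum_apply]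
    rw [Finset.sum_eq_single_of_mem (⟨δ, hδ⟩ : {y // y ∈ s}) (Finset.mem_attach _ _)]
    · exact DirectSum.of_eq_same _ _
    · intro b _ hb
      exact DirectSum.of_eq_of_ne _ _ _ (fun hh => hb (Subtype.ext hh.symm))
  have h5 : a δ = 0 := by rw [h2]; rfl
  have := h4.symm.trans h5
  exact congrArg Subtype.val this

end DUAux

open DUAux FreeMonoid in
/-- Lemma 1.11: let `A = D(α,β)` (`β ≠ 0`) be graded by a group `G`
compatibly with the ℕ-grading, and let `x 0, x 1` be linearly independent
`G`-homogeneous elements of `A₁` with `x i ∈ 𝒜 (g i)`.  Suppose two nontrivial cubic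
relations `∑ c_{ijl}·xᵢxⱼxₗ = 0` and `∑ e_{ijl}·xᵢxⱼxₗ = 0` hold, and some monomial has
`c_{ijl} ≠ 0` but `e_{ijl} = 0`.  Then all monomials `xᵢxⱼxₗ` with `e_{ijl} ≠ 0` have
the same `G`-degree `g i · g j · g l`. -/
theorem downUp_cubic_relations_homogeneous
    (k : Type*) [Field k] [IsAlgClosed k] [CharZero k]
    (α β : k) (hβ : β ≠ 0)
    (G : Type*) [Group G] [DecidableEq G]
    (𝒜 : G → Submodule k (DownUp k α β))
    -- `𝒜` is a `G`-grading of `A`: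
    (hone : (1 : DownUp k α β) ∈ 𝒜 1)
    (hmul : ∀ g h : G, ∀ a ∈ 𝒜 g, ∀ b ∈ 𝒜 h, a * b ∈ 𝒜 (g * h))
    (hdirect : DirectSum.IsInternal 𝒜)
    -- the grading is homogeneous (compatible with the ℕ-grading):
    (hhomog : ∀ g : G, 𝒜 g = Submodule.span k
        ((𝒜 g : Set (DownUp k α β)) ∩ {z | ∃ n : ℕ, z ∈ DownUp.degComp k α β n}))
    -- `x 0, x 1` are linearly independent `G`-homogeneous elements of `A₁`:
    (x : Fin 2 → DownUp k α β) (g : Fin 2 → G)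
    (hx1 : ∀ i, x i ∈ DownUp.degComp k α β 1)
    (hxg : ∀ i, x i ∈ 𝒜 (g i))
    (hind : LinearIndependent k x)
    -- the two nontrivial relations:
    (c e : Fin 2 → Fin 2 → Fin 2 → k)
    (hc0 : ∃ i j l, c i j l ≠ 0) (he0 : ∃ i j l, e i j l ≠ 0)
    (hf1 : ∑ i : Fin 2, ∑ j : Fin 2, ∑ l : Fin 2, c i j l • (x i * x j * x l) = 0)
    (hf2 : ∑ i : Fin 2, ∑ j : Fin 2, ∑ l : Fin 2, e i j l • (x i * x j * x l) = 0)
    (hce : ∃ i j l, c i j l ≠ 0 ∧ e i j l = 0) :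
    ∀ i j l i' j' l' : Fin 2, e i j l ≠ 0 → e i' j' l' ≠ 0 →
      g i * g j * g l = g i' * g j' * g l' := by

  classical
  intro i j l i' j' l' he he'
  by_contra hne
  -- the trilinear map
  set mon : Fin 2 × Fin 2 × Fin 2 → DownUp k α β :=
    fun t => x t.1 * x t.2.1 * x t.2.2 with hmon_def
  set deg : Fin 2 × Fin 2 × Fin 2 → G := fun t => g t.1 * g t.2.1 * g t.2.2 with hdeg_def
  set Φ : ((Fin 2 × Fin 2 × Fin 2) → k) →ₗ[k] DownUp k α β :=
    { toFun := fun cc => ∑ t, cc t • mon t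
      map_add' := fun v w => by simp [add_smul, Finset.sum_add_distrib]
      map_smul' := fun a v => by simp [smul_smul, Finset.smul_sum] } with hΦ_def
  have hΦ : ∀ cc, Φ cc = ∑ t, cc t • mon t := fun _ => rfl
  have hmon : ∀ t, mon t ∈ 𝒜 (deg t) := fun t =>
    hmul _ _ _ (hmul _ _ _ (hxg _) _ (hxg _)) _ (hxg _)
  -- hf1 / hf2 as kernel statements
  have hc_ker : Φ (fun t => c t.1 t.2.1 t.2.2) = 0 := by
    rw [hΦ, Fintype.sum_prod_type]
    simpa [Fintype.sum_prod_type] using hf1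
  have he_sum : (∑ t : Fin 2 × Fin 2 × Fin 2, e t.1 t.2.1 t.2.2 • mon t) = 0 := by
    rw [Fintype.sum_prod_type]
    simpa [Fintype.sum_prod_type] using hf2
  -- vanishing of each G-homogeneous component of the e-relation
  have key : ∀ γ : G, Φ (fun t => if deg t = γ then e t.1 t.2.1 t.2.2 else 0) = 0 := by
    intro γ
    have heq : Φ (fun t => if deg t = γ then e t.1 t.2.1 t.2.2 else 0)
        = ∑ t ∈ Finset.univ.filter (fun t => deg t = γ), e t.1 t.2.1 t.2.2 • mon t := by
      rw [hΦ, Finset.sum_filter]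
      congr 1
      funext t
      by_cases h : deg t = γ <;> simp [h]
    rw [heq]
    by_cases hγ : γ ∈ Finset.image deg Finset.univ
    · refine sum_comp_eq_zero 𝒜 hdirect (s := Finset.image deg Finset.univ)
        (S := fun γ' => ∑ t ∈ Finset.univ.filter (fun t => deg t = γ'), e t.1 t.2.1 t.2.2 • mon t)
        ?_ ?_ γ hγ
      · intro δ hδ
        refine Submodule.sum_mem _ fun t ht => Submodule.smul_mem _ _ ?_
        exact (Finset.mem_filter.1 ht).2 ▸ hmon t
      · rw [Finset.sum_fiberwise_of_maps_to (fun t _ => Finset.mem_image_of_mem deg (Finset.mem_univ t))]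
        exact he_sum
    · apply Finset.sum_eq_zero
      intro t ht
      exact absurd ((Finset.mem_filter.1 ht).2 ▸ Finset.mem_image_of_mem deg (Finset.mem_univ t)) hγ
  -- the generators lie in the span of x
  have hgen_deg : ∀ a : Fin 2, gen k α β a ∈ DownUp.degComp k α β 1 := by
    intro a
    apply Submodule.subset_span
    exact ⟨ofList [a], rfl, by simp [DownUp.wordVal, FreeMonoid.lift_ofList, gen]⟩
  have hA1_le : DownUp.degComp k α β 1 ≤ Submodule.span k (Set.range (gen k α β)) := by
    rw [DownUp.degComp]
    apply Submodule.span_le.2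
    rintro z ⟨w, hw, rfl⟩
    obtain ⟨a, ha⟩ := List.length_eq_one_iff.1 (by simpa [FreeMonoid.length] using hw)
    have hwa : w = ofList [a] := ha
    rw [hwa, show DownUp.wordVal k α β (ofList [a]) = gen k α β a by
      simp [DownUp.wordVal, FreeMonoid.lift_ofList, gen]]
    exact Submodule.subset_span ⟨a, rfl⟩
  have hfingen : FiniteDimensional k (Submodule.span k (Set.range (gen k α β))) :=
    FiniteDimensional.span_of_finite k (Set.finite_range _)
  have hfinA1 : FiniteDimensional k (DownUp.degComp k α β 1) :=
    Submodule.finiteDimensional_of_le hA1_le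
  have hfrA1 : Module.finrank k (DownUp.degComp k α β 1) ≤ 2 := by
    refine le_trans (Submodule.finrank_mono hA1_le) ?_
    refine le_trans (finrank_span_le_card _) ?_
    rw [Set.toFinset_range]
    exact le_trans (Finset.card_image_le) (by simp)
  have hNeq : Submodule.span k (Set.range x) = DownUp.degComp k α β 1 := by
    refine Submodule.eq_of_le_of_finrank_le ?_ ?_
    · rw [Submodule.span_le]
      rintro z ⟨a, rfl⟩
      exact hx1 a
    · rw [finrank_span_eq_card hind]
      simpa using hfrA1
  have hgen_mem : ∀ a : Fin 2, gen k α β a ∈ Submodule.span k (Set.range x) := by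
    intro a; rw [hNeq]; exact hgen_deg a
  -- the six reduced words lie in the range of Φ
  have hspan_mon : Submodule.span k (Set.range mon) ≤ LinearMap.range Φ := by
    rw [Submodule.span_le]
    rintro z ⟨t, rfl⟩
    exact ⟨Pi.single t 1, by simp [hΦ, Pi.single_apply, ite_smul, Finset.sum_ite_eq']⟩
  have hmul3 : Submodule.span k (Set.range x) * Submodule.span k (Set.range x) *
      Submodule.span k (Set.range x) ≤ Submodule.span k (Set.range mon) := by
    rw [Submodule.span_mul_span, Submodule.span_mul_span]
    apply Submodule.span_le.2
    rintro z ⟨pq, ⟨p, ⟨i1, rfl⟩, q, ⟨i2, rfl⟩, rfl⟩, r, ⟨i3, rfl⟩, rfl⟩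
    exact Submodule.subset_span ⟨(i1, i2, i3), rfl⟩
  have hwords : ∀ iw : Fin 6, wv k α β (ofList (m6 iw)) ∈ LinearMap.range Φ := by
    intro iw
    fin_cases iw <;>
    · simp only [m6]
      rw [wv3, ← mul_assoc]
      exact hspan_mon (hmul3 (Submodule.mul_mem_mul
        (Submodule.mul_mem_mul (hgen_mem _) (hgen_mem _)) (hgen_mem _)))
  -- dimension bounds
  have hind6 : LinearIndependent k
      (fun iw : Fin 6 => (⟨wv k α β (ofList (m6 iw)), hwords iw⟩ : LinearMap.range Φ)) := by
    apply LinearIndependent.of_comp (LinearMap.range Φ).subtype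
    exact words_indep k α β
  have h6 : 6 ≤ Module.finrank k (LinearMap.range Φ) := by
    simpa using hind6.fintype_card_le_finrank
  obtain ⟨i0, j0, l0, hc00, he00⟩ := hce
  set v0 : (Fin 2 × Fin 2 × Fin 2) → k := fun t => c t.1 t.2.1 t.2.2 with hv0
  set v1 : (Fin 2 × Fin 2 × Fin 2) → k :=
    fun t => if deg t = g i * g j * g l then e t.1 t.2.1 t.2.2 else 0 with hv1
  set v2 : (Fin 2 × Fin 2 × Fin 2) → k :=
    fun t => if deg t = g i' * g j' * g l' then e t.1 t.2.1 t.2.2 else 0 with hv2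
  have hker : ∀ m : Fin 3, ![v0, v1, v2] m ∈ LinearMap.ker Φ := by
    intro m
    fin_cases m
    · exact LinearMap.mem_ker.2 hc_ker
    · exact LinearMap.mem_ker.2 (key _)
    · exact LinearMap.mem_ker.2 (key _)
  have hne2 : ¬ g i' * g j' * g l' = g i * g j * g l := fun h => hne h.symm
  have hind3 : LinearIndependent k ![v0, v1, v2] := by
    rw [Fintype.linearIndependent_iff]
    intro w hw
    rw [Fin.sum_univ_three] at hw
    have h0 := congrFun hw (i0, j0, l0)
    have h1 := congrFun hw (i, j, l)
    have h2 := congrFun hw (i', j', l')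
    simp only [Matrix.cons_val_zero, Matrix.cons_val_one, Matrix.head_cons,
      Matrix.cons_val_two, Matrix.tail_cons, Pi.add_apply, Pi.smul_apply, smul_eq_mul,
      Pi.zero_apply, hv0, hv1, hv2, hdeg_def, he00, ite_self, mul_zero, add_zero, zero_add,
      eq_self_iff_true, if_true, hne, hne2, if_false, ite_false, ite_true] at h0 h1 h2
    have hw0 : w 0 = 0 := by
      rcases mul_eq_zero.1 h0 with h | h
      · exact h
      · exact absurd h hc00
    rw [hw0, zero_mul, zero_add] at h1 h2
    have hw1 : w 1 = 0 := by
      rcases mul_eq_zero.1 h1 with h | h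
      · exact h
      · exact absurd h he
    have hw2 : w 2 = 0 := by
      rcases mul_eq_zero.1 h2 with h | h
      · exact h
      · exact absurd h he'
    intro m
    fin_cases m <;> assumption
  have hind3' : LinearIndependent k
      (fun m : Fin 3 => (⟨![v0, v1, v2] m, hker m⟩ : LinearMap.ker Φ)) := by
    apply LinearIndependent.of_comp (LinearMap.ker Φ).subtype
    exact hind3
  have h3 : 3 ≤ Module.finrank k (LinearMap.ker Φ) := by
    simpa using hind3'.fintype_card_le_finrank
  have hrn := LinearMap.finrank_range_add_finrank_ker Φ
  have hdom : Module.finrank k ((Fin 2 × Fin 2 × Fin 2) → k) = 8 := by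
    simp [Module.finrank_pi]
  omega


end
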